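/- For any Eulerian poset B of positive rank n, the g-polynomial satisfies Stanley's inversion formula: Σ_{x ∈ B} (-1)^{ρ(x)} g([0̂,x];t) g([x,1̂]*;t) = 0, and likewise Σ_{x ∈ B} (-1)^{ρ(x)} g([0̂,x]*;t) g([x,1̂];t) = 0. -/

import Mathlib

/- Statement 10 (Stanley inversion): for any Eulerian poset B of positive rank n,
  Σ_{x ∈ B} (-1)^{ρ(x)} g([0̂,x];t) g([x,1̂]*;t) = 0  and
  Σ_{x ∈ B} (-1)^{ρ(x)} g([0̂,x]*;t) g([x,1̂];t) = 0. -/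

open Classical Polynomial
noncomputable section

/-- A finite graded poset (with rank function ρ) is Eulerian if every nontrivial interval
has as many elements of odd rank as of even rank. -/
def IsEulerian {α : Type*} [Fintype α] [PartialOrder α] (ρ : α → ℕ) : Prop :=
  ∀ z x : α, z < x →
    (Finset.univ.filter fun y => z ≤ y ∧ y ≤ x ∧ Odd (ρ y)).card =
    (Finset.univ.filter fun y => z ≤ y ∧ y ≤ x ∧ Even (ρ y)).card

/-- A system of g-polynomials for all intervals of a finite graded poset: G z x is
Stanley's g-polynomial g([z,x];t).  It satisfies g = 1 on rank-0 intervals, has degree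
strictly less than half the rank of the interval, and obeys Stanley's defining recursion
t^n g([z,x];t⁻¹) = Σ_{z ≤ y ≤ x} (t-1)^{n-ρ(y)+ρ(z)} g([z,y];t). -/
def IsGSystem {α : Type*} [Fintype α] [PartialOrder α] (ρ : α → ℕ)
    (G : α → α → Polynomial ℤ) : Prop :=
  (∀ x, G x x = 1) ∧
  ∀ z x : α, z < x →
    2 * (G z x).natDegree < ρ x - ρ z ∧
    Polynomial.reflect (ρ x - ρ z) (G z x) =
      ∑ y ∈ Finset.univ.filter (fun y => z ≤ y ∧ y ≤ x),
        (Polynomial.X - 1) ^ (ρ x - ρ y) * G z y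

section Aux
variable {α : Type*} [Fintype α] [PartialOrder α]

/-- interval as a finset -/
def SS (z x : α) : Finset α := Finset.univ.filter (fun y => z ≤ y ∧ y ≤ x)

lemma mem_SS {z x y : α} : y ∈ SS z x ↔ z ≤ y ∧ y ≤ x := by simp [SS]

lemma SS_self (z : α) : SS z z = {z} := by
  ext y
  simp only [mem_SS, Finset.mem_singleton]
  constructor
  · rintro ⟨h1, h2⟩; exact le_antisymm h2 h1
  · rintro rfl; exact ⟨le_rfl, le_rfl⟩

lemma rho_lt (ρ : α → ℕ) (hcov : ∀ a b : α, a ⋖ b → ρ b = ρ a + 1) :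
    ∀ x z : α, z < x → ρ z < ρ x := by
  intro x
  induction x using WellFoundedLT.induction with
  | ind x IH =>
    intro z hz
    obtain ⟨m, hm, hmax⟩ := Set.Finite.exists_maximalFor
      id _ (Set.toFinite {w : α | z ≤ w ∧ w < x}) ⟨z, le_rfl, hz⟩
    obtain ⟨hzm, hmx⟩ := hm
    have hcv : m ⋖ x := by
      refine ⟨hmx, fun c hmc hcx => ?_⟩
      have : m = c := le_antisymm hmc.le (hmax ⟨hzm.trans hmc.le, hcx⟩ hmc.le)
      exact absurd this hmc.ne
    have hx : ρ x = ρ m + 1 := hcov m x hcv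
    rcases eq_or_lt_of_le hzm with rfl | h
    · omega
    · have := IH m hmx z h
      omega

lemma eq_zero_of_reflect_eq (p : Polynomial ℤ) (N : ℕ) (h1 : Polynomial.reflect N p = p)
    (h2 : 2 * p.natDegree < N) : p = 0 := by
  ext k
  by_cases hk : k ≤ p.natDegree
  · have h3 : p.coeff k = p.coeff (N - k) := by
      conv_lhs => rw [← h1]
      rw [coeff_reflect, revAt_le (by omega)]
    have h4 : p.coeff (N - k) = 0 :=
      coeff_eq_zero_of_natDegree_lt (show p.natDegree < N - k by omega)
    simp [h3, h4]
  · have h4 : p.coeff k = 0 :=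
      coeff_eq_zero_of_natDegree_lt (show p.natDegree < k by omega)
    simp [h4]

lemma reflect_sum {β : Type*} (s : Finset β) (f : β → Polynomial ℤ) (N : ℕ) :
    Polynomial.reflect N (∑ i ∈ s, f i) = ∑ i ∈ s, Polynomial.reflect N (f i) := by
  induction s using Finset.cons_induction with
  | empty => simp
  | cons a s ha ih => rw [Finset.sum_cons, Finset.sum_cons, reflect_add, ih]

lemma reflect_zero' (p : Polynomial ℤ) : Polynomial.reflect 0 p = p := by
  ext k
  rw [coeff_reflect]
  rcases Nat.eq_zero_or_pos k with rfl | hk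
  · rw [revAt_le (le_refl 0)]
  · rw [revAt_eq_self_of_lt hk]

lemma neg_one_pow_split (a b c : ℕ) : ((-1:ℤ))^(a+c) = (-1)^(c+b) * (-1)^(a+b) := by
  have h : (c+b)+(a+b) = (a+c) + 2*b := by ring
  have h2 : ((-1:ℤ))^(a+c+2*b) = (-1)^(a+c) := by
    rw [pow_add, pow_mul, neg_one_sq, one_pow, mul_one]
  rw [← pow_add, h, h2]

lemma C_neg_one_pow (k : ℕ) : ((-1 : Polynomial ℤ))^k = Polynomial.C ((-1:ℤ)^k) := by
  rw [map_pow, map_neg, map_one]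

lemma euler_sum {ρ : α → ℕ} (hE : IsEulerian ρ) {w v : α} (h : w < v) :
    ∑ y ∈ SS w v, ((-1:ℤ)) ^ ρ y = 0 := by
  rw [← Finset.sum_filter_add_sum_filter_not (SS w v) (fun y => Even (ρ y))]
  rw [Finset.sum_congr rfl (fun y hy => (Finset.mem_filter.1 hy).2.neg_one_pow),
    Finset.sum_congr rfl (fun y hy =>
      (Nat.not_even_iff_odd.1 (Finset.mem_filter.1 hy).2).neg_one_pow)]
  have h1 : (SS w v).filter (fun y => Even (ρ y)) =
      Finset.univ.filter (fun y => w ≤ y ∧ y ≤ v ∧ Even (ρ y)) := by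
    rw [SS, Finset.filter_filter]
    apply Finset.filter_congr; intro y _; tauto
  have h2 : (SS w v).filter (fun y => ¬ Even (ρ y)) =
      Finset.univ.filter (fun y => w ≤ y ∧ y ≤ v ∧ Odd (ρ y)) := by
    rw [SS, Finset.filter_filter]
    apply Finset.filter_congr; intro y _
    constructor
    · rintro ⟨⟨a, b⟩, c⟩; exact ⟨a, b, Nat.not_even_iff_odd.1 c⟩
    · rintro ⟨a, b, c⟩; exact ⟨⟨a, b⟩, Nat.not_even_iff_odd.2 c⟩
  rw [Finset.sum_const, Finset.sum_const, h1, h2, hE w v h]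
  simp

lemma euler_sum_C {ρ : α → ℕ} (hE : IsEulerian ρ) {w v : α} (h : w < v) :
    ∑ y ∈ SS w v, Polynomial.C (((-1:ℤ)) ^ ρ y) = 0 := by
  rw [← map_sum, euler_sum hE h, map_zero]

lemma triple_interchange {M : Type*} [AddCommMonoid M] (z x : α) (f : α → α → α → M) :
    ∑ y ∈ SS z x, ∑ w ∈ SS z y, ∑ v ∈ SS y x, f w y v
      = ∑ w ∈ SS z x, ∑ v ∈ SS w x, ∑ y ∈ SS w v, f w y v := by
  rw [Finset.sum_comm' (s' := fun w => SS w x) (t' := SS z x)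
    (fun y w => by
      simp only [mem_SS]
      constructor
      · rintro ⟨⟨h1, h2⟩, h3, h4⟩; exact ⟨⟨h4, h2⟩, h3, h4.trans h2⟩
      · rintro ⟨⟨h1, h2⟩, h3, h4⟩; exact ⟨⟨h3.trans h1, h2⟩, h3, h1⟩)]
  refine Finset.sum_congr rfl fun w hw => ?_
  rw [Finset.sum_comm' (s' := fun v => SS w v) (t' := SS w x)
    (fun y v => by
      simp only [mem_SS]
      constructor
      · rintro ⟨⟨h1, h2⟩, h3, h4⟩; exact ⟨⟨h1, h3⟩, h1.trans h3, h4⟩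
      · rintro ⟨⟨h1, h2⟩, h3, h4⟩; exact ⟨⟨h1, h2.trans h4⟩, h2, h4⟩)]

end Aux


section Main
open OrderDual

variable {α : Type*} [Fintype α] [PartialOrder α] [BoundedOrder α]
variable {ρ : α → ℕ} {G : α → α → Polynomial ℤ} {Gd : αᵒᵈ → αᵒᵈ → Polynomial ℤ}

lemma rho_mono (hcov : ∀ a b : α, a ⋖ b → ρ b = ρ a + 1) {z x : α} (h : z ≤ x) :
    ρ z ≤ ρ x := by
  rcases eq_or_lt_of_le h with rfl | h
  · exact le_rfl
  · exact (rho_lt ρ hcov x z h).le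

lemma recG (hG : IsGSystem ρ G) {z x : α} (h : z ≤ x) :
    Polynomial.reflect (ρ x - ρ z) (G z x)
      = ∑ y ∈ SS z x, (Polynomial.X - 1) ^ (ρ x - ρ y) * G z y := by
  rcases eq_or_lt_of_le h with rfl | h
  · rw [SS_self, Finset.sum_singleton, Nat.sub_self, pow_zero, one_mul, hG.1, reflect_zero']
  · exact (hG.2 z x h).2

lemma degG_le (hG : IsGSystem ρ G) {z x : α} (h : z ≤ x) :
    (G z x).natDegree ≤ ρ x - ρ z := by
  rcases eq_or_lt_of_le h with rfl | h
  · simp [hG.1]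
  · have := (hG.2 z x h).1; omega

lemma recGd (hcov : ∀ a b : α, a ⋖ b → ρ b = ρ a + 1)
    (hGd : IsGSystem (fun y : αᵒᵈ => ρ ⊤ - ρ (ofDual y)) Gd) {w y : α} (h : w ≤ y) :
    Polynomial.reflect (ρ y - ρ w) (Gd (toDual y) (toDual w))
      = ∑ u ∈ SS w y, (Polynomial.X - 1) ^ (ρ u - ρ w) * Gd (toDual y) (toDual u) := by
  rcases eq_or_lt_of_le h with rfl | h
  · rw [SS_self, Finset.sum_singleton, Nat.sub_self, pow_zero, one_mul, hGd.1, reflect_zero']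
  · have hyt : ρ y ≤ ρ ⊤ := rho_mono hcov le_top
    have hwy : ρ w ≤ ρ y := (rho_lt ρ hcov y w h).le
    have h2 := (hGd.2 (toDual y) (toDual w) (by simpa using h)).2
    simp only [ofDual_toDual] at h2
    rw [show ρ ⊤ - ρ w - (ρ ⊤ - ρ y) = ρ y - ρ w from by omega] at h2
    rw [h2]
    refine Finset.sum_nbij' (i := fun (u : αᵒᵈ) => (ofDual u : α))
      (j := fun (a : α) => (toDual a : αᵒᵈ)) ?_ ?_ ?_ ?_ ?_
    · intro u hu
      simp only [Finset.mem_filter, Finset.mem_univ, true_and] at hu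
      rw [mem_SS]
      exact ⟨hu.2, hu.1⟩
    · intro a ha
      rw [mem_SS] at ha
      simp only [Finset.mem_filter, Finset.mem_univ, true_and]
      exact ⟨ha.2, ha.1⟩
    · intro u _; rfl
    · intro a _; rfl
    · intro u hu
      simp only [Finset.mem_filter, Finset.mem_univ, true_and] at hu
      have hau : w ≤ ofDual u := hu.2
      have h3 : ρ (ofDual u) ≤ ρ y := rho_mono hcov hu.1
      have e2 : ρ ⊤ - ρ w - (ρ ⊤ - ρ (ofDual u)) = ρ (ofDual u) - ρ w := by omega
      rw [e2]
      rfl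

lemma degGd_le (hcov : ∀ a b : α, a ⋖ b → ρ b = ρ a + 1)
    (hGd : IsGSystem (fun y : αᵒᵈ => ρ ⊤ - ρ (ofDual y)) Gd) {w y : α} (h : w ≤ y) :
    (Gd (toDual y) (toDual w)).natDegree ≤ ρ y - ρ w := by
  rcases eq_or_lt_of_le h with rfl | h
  · simp [hGd.1]
  · have h1 := (hGd.2 (toDual y) (toDual w) (by simpa using h)).1
    have hyt : ρ y ≤ ρ ⊤ := rho_mono hcov le_top
    have hwy : ρ w ≤ ρ y := (rho_lt ρ hcov y w h).le
    simp only [ofDual_toDual] at h1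
    omega

lemma degGd_lt (hcov : ∀ a b : α, a ⋖ b → ρ b = ρ a + 1)
    (hGd : IsGSystem (fun y : αᵒᵈ => ρ ⊤ - ρ (ofDual y)) Gd) {w y : α} (h : w < y) :
    2 * (Gd (toDual y) (toDual w)).natDegree < ρ y - ρ w := by
  have h1 := (hGd.2 (toDual y) (toDual w) (by simpa using h)).1
  have hyt : ρ y ≤ ρ ⊤ := rho_mono hcov le_top
  have hwy : ρ w ≤ ρ y := (rho_lt ρ hcov y w h).le
  simp only [ofDual_toDual] at h1
  omega

lemma P1 (hcov : ∀ a b : α, a ⋖ b → ρ b = ρ a + 1) (hE : IsEulerian ρ)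
    (hG : IsGSystem ρ G) (hGd : IsGSystem (fun y : αᵒᵈ => ρ ⊤ - ρ (ofDual y)) Gd)
    {z x : α} (hzx : z < x) :
    ∑ y ∈ SS z x, Polynomial.C ((-1:ℤ)^(ρ y + ρ z)) *
      (G z y * Gd (toDual x) (toDual y)) = 0 := by
  have hmono : ∀ {a b : α}, a ≤ b → ρ a ≤ ρ b := fun h => rho_mono hcov h
  set n := ρ x - ρ z with hn
  have hn1 : 1 ≤ n := by have := rho_lt ρ hcov x z hzx; omega
  set P : Polynomial ℤ := ∑ y ∈ SS z x, Polynomial.C ((-1:ℤ)^(ρ y + ρ z)) *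
    (G z y * Gd (toDual x) (toDual y)) with hP
  have hdeg : 2 * P.natDegree < n := by
    have hb : P.natDegree ≤ (n-1)/2 := by
      apply Polynomial.natDegree_sum_le_of_forall_le
      intro y hy
      rw [mem_SS] at hy
      have hd : (Polynomial.C ((-1:ℤ)^(ρ y + ρ z)) *
          (G z y * Gd (toDual x) (toDual y))).natDegree
          ≤ (G z y).natDegree + (Gd (toDual x) (toDual y)).natDegree := by
        refine le_trans natDegree_mul_le ?_
        simp only [natDegree_C, zero_add]
        exact natDegree_mul_le
      have key : 2 * ((G z y).natDegree + (Gd (toDual x) (toDual y)).natDegree) < n := by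
        rcases eq_or_lt_of_le hy.1 with rfl | h1
        · have e1 : (G z z).natDegree = 0 := by rw [hG.1]; exact natDegree_one
          have e2 := degGd_lt hcov hGd hzx
          omega
        · rcases eq_or_lt_of_le hy.2 with rfl | h2
          · have e1 : (Gd (toDual y) (toDual y)).natDegree = 0 := by
              rw [hGd.1]; exact natDegree_one
            have e2 := (hG.2 z y hzx).1
            omega
          · have e1 := (hG.2 z y h1).1
            have e2 := degGd_lt hcov hGd h2
            have m1 := hmono hy.1
            have m2 := hmono hy.2
            omega
      omega
    omega
  have key : Polynomial.reflect n P = P := by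
    rw [hP, reflect_sum]
    rw [Finset.sum_congr rfl (fun y hy => show
        Polynomial.reflect n (Polynomial.C ((-1:ℤ)^(ρ y + ρ z)) *
          (G z y * Gd (toDual x) (toDual y)))
        = ∑ w ∈ SS z y, ∑ v ∈ SS y x,
            Polynomial.C ((-1:ℤ)^(ρ y + ρ z)) *
              (((Polynomial.X - 1)^(ρ y - ρ w) * G z w) *
               ((Polynomial.X - 1)^(ρ v - ρ y) * Gd (toDual x) (toDual v))) from by
      rw [mem_SS] at hy
      rw [reflect_C_mul]
      have hsplit : n = (ρ y - ρ z) + (ρ x - ρ y) := by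
        have := hmono hy.1; have := hmono hy.2; omega
      rw [hsplit, Polynomial.reflect_mul _ _ (degG_le hG hy.1) (degGd_le hcov hGd hy.2),
        recG hG hy.1, recGd hcov hGd hy.2, Finset.sum_mul_sum, Finset.mul_sum]
      exact Finset.sum_congr rfl fun w _ => by rw [Finset.mul_sum])]
    rw [triple_interchange z x (fun w y v =>
      Polynomial.C ((-1:ℤ)^(ρ y + ρ z)) *
        (((Polynomial.X - 1)^(ρ y - ρ w) * G z w) *
         ((Polynomial.X - 1)^(ρ v - ρ y) * Gd (toDual x) (toDual v))))]
    rw [Finset.sum_congr rfl (fun w hw => Finset.sum_congr rfl (fun v hv => show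
        (∑ y ∈ SS w v, Polynomial.C ((-1:ℤ)^(ρ y + ρ z)) *
          (((Polynomial.X - 1)^(ρ y - ρ w) * G z w) *
           ((Polynomial.X - 1)^(ρ v - ρ y) * Gd (toDual x) (toDual v))))
        = ((Polynomial.X - 1)^(ρ v - ρ w) * (G z w * Gd (toDual x) (toDual v)) *
            Polynomial.C ((-1:ℤ)^(ρ z))) * (∑ y ∈ SS w v, Polynomial.C ((-1:ℤ)^(ρ y))) from by
      rw [Finset.mul_sum]
      refine Finset.sum_congr rfl fun y hy => ?_
      rw [mem_SS] at hy hw hv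
      have e2 : (Polynomial.X - 1 : Polynomial ℤ)^(ρ y - ρ w) *
          (Polynomial.X - 1)^(ρ v - ρ y) = (Polynomial.X - 1)^(ρ v - ρ w) := by
        rw [← pow_add]
        congr 1
        have := hmono hy.1; have := hmono hy.2; omega
      have e3 : Polynomial.C ((-1:ℤ)^(ρ y + ρ z)) =
          Polynomial.C ((-1:ℤ)^(ρ z)) * Polynomial.C ((-1:ℤ)^(ρ y)) := by
        rw [← map_mul, ← pow_add, Nat.add_comm]
      linear_combination (Polynomial.C ((-1:ℤ)^(ρ y + ρ z)) * G z w *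
          Gd (toDual x) (toDual v)) * e2 +
        ((Polynomial.X - 1 : Polynomial ℤ)^(ρ v - ρ w) * G z w *
          Gd (toDual x) (toDual v)) * e3))]
    rw [Finset.sum_congr rfl (fun w hw => show
        (∑ v ∈ SS w x, ((Polynomial.X - 1)^(ρ v - ρ w) *
            (G z w * Gd (toDual x) (toDual v)) * Polynomial.C ((-1:ℤ)^(ρ z))) *
          (∑ y ∈ SS w v, Polynomial.C ((-1:ℤ)^(ρ y))))
        = Polynomial.C ((-1:ℤ)^(ρ w + ρ z)) * (G z w * Gd (toDual x) (toDual w)) from by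
      rw [mem_SS] at hw
      rw [Finset.sum_eq_single_of_mem w (mem_SS.2 ⟨le_rfl, hw.2⟩)
        (fun v hv hne => by
          rw [mem_SS] at hv
          have hlt : w < v := lt_of_le_of_ne hv.1 (Ne.symm hne)
          rw [euler_sum_C hE hlt, mul_zero])]
      rw [SS_self, Finset.sum_singleton, Nat.sub_self, pow_zero, one_mul]
      have e3 : Polynomial.C ((-1:ℤ)^(ρ w + ρ z)) =
          Polynomial.C ((-1:ℤ)^(ρ z)) * Polynomial.C ((-1:ℤ)^(ρ w)) := by
        rw [← map_mul, ← pow_add, Nat.add_comm]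
      linear_combination (G z w * Gd (toDual x) (toDual w)) * e3.symm)]
  have := eq_zero_of_reflect_eq P n key hdeg
  rw [hP] at this
  exact this

lemma P2 (hcov : ∀ a b : α, a ⋖ b → ρ b = ρ a + 1) (hE : IsEulerian ρ)
    (hG : IsGSystem ρ G) (hGd : IsGSystem (fun y : αᵒᵈ => ρ ⊤ - ρ (ofDual y)) Gd) :
    ∀ N : ℕ, ∀ z x : α, z < x → ρ x - ρ z ≤ N →
    ∑ y ∈ SS z x, Polynomial.C ((-1:ℤ)^(ρ y + ρ z)) *
      (Gd (toDual y) (toDual z) * G y x) = 0 := by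
  have hmono : ∀ {a b : α}, a ≤ b → ρ a ≤ ρ b := fun h => rho_mono hcov h
  intro N
  induction N with
  | zero =>
    intro z x hzx hle
    have := rho_lt ρ hcov x z hzx
    omega
  | succ N IH =>
    intro z x hzx hle
    have hrk := rho_lt ρ hcov x z hzx
    set P : Polynomial ℤ := ∑ y ∈ SS z x, Polynomial.C ((-1:ℤ)^(ρ y + ρ z)) *
      (Gd (toDual y) (toDual z) * G y x) with hP
    have hKzero : ∀ w v : α, z ≤ w → w < v → v ≤ x → ¬(w = z ∧ v = x) →
        ∑ y ∈ SS w v, Polynomial.C ((-1:ℤ)^(ρ y + ρ w)) *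
          (Gd (toDual y) (toDual w) * G y v) = 0 := by
      intro w v hzw hwv hvx hne
      apply IH w v hwv
      have m1 := hmono hzw
      have m2 := hmono hvx
      have m3 := rho_lt ρ hcov v w hwv
      by_cases hw : w = z
      · subst hw
        have hvx' : v ≠ x := fun hh => hne ⟨rfl, hh⟩
        have := rho_lt ρ hcov x v (lt_of_le_of_ne hvx hvx')
        omega
      · have := rho_lt ρ hcov w z (lt_of_le_of_ne hzw (Ne.symm hw))
        omega
    have hKdiag : ∀ w : α, (∑ y ∈ SS w w, Polynomial.C ((-1:ℤ)^(ρ y + ρ w)) *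
        (Gd (toDual y) (toDual w) * G y w)) = 1 := by
      intro w
      rw [SS_self, Finset.sum_singleton, hGd.1, hG.1, one_mul]
      have : ((-1:ℤ))^(ρ w + ρ w) = 1 := Even.neg_one_pow ⟨ρ w, rfl⟩
      rw [this, map_one, mul_one]
    have hdeg : 2 * P.natDegree < ρ x - ρ z := by
      have hb : P.natDegree ≤ (ρ x - ρ z - 1)/2 := by
        apply Polynomial.natDegree_sum_le_of_forall_le
        intro y hy
        rw [mem_SS] at hy
        have hd : (Polynomial.C ((-1:ℤ)^(ρ y + ρ z)) *
            (Gd (toDual y) (toDual z) * G y x)).natDegree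
            ≤ (Gd (toDual y) (toDual z)).natDegree + (G y x).natDegree := by
          refine le_trans natDegree_mul_le ?_
          simp only [natDegree_C, zero_add]
          exact natDegree_mul_le
        have key : 2 * ((Gd (toDual y) (toDual z)).natDegree + (G y x).natDegree)
            < ρ x - ρ z := by
          rcases eq_or_lt_of_le hy.1 with rfl | h1
          · have e1 : (Gd (toDual z) (toDual z)).natDegree = 0 := by
              rw [hGd.1]; exact natDegree_one
            have e2 := (hG.2 z x hzx).1
            omega
          · rcases eq_or_lt_of_le hy.2 with rfl | h2
            · have e1 : (G y y).natDegree = 0 := by rw [hG.1]; exact natDegree_one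
              have e2 := degGd_lt hcov hGd hzx
              omega
            · have e1 := degGd_lt hcov hGd h1
              have e2 := (hG.2 y x h2).1
              have m1 := hmono hy.1
              have m2 := hmono hy.2
              omega
        omega
      omega
    have key : Polynomial.reflect (ρ x - ρ z) P = P := by
      rw [hP, reflect_sum]
      rw [Finset.sum_congr rfl (fun y hy => show
          Polynomial.reflect (ρ x - ρ z) (Polynomial.C ((-1:ℤ)^(ρ y + ρ z)) *
            (Gd (toDual y) (toDual z) * G y x))
          = ∑ w ∈ SS z y, ∑ v ∈ SS y x,
              Polynomial.C ((-1:ℤ)^(ρ y + ρ z)) *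
                (((Polynomial.X - 1)^(ρ w - ρ z) * Gd (toDual y) (toDual w)) *
                 ((Polynomial.X - 1)^(ρ x - ρ v) * G y v)) from by
        rw [mem_SS] at hy
        rw [reflect_C_mul]
        have hsplit : ρ x - ρ z = (ρ y - ρ z) + (ρ x - ρ y) := by
          have := hmono hy.1; have := hmono hy.2; omega
        rw [hsplit, Polynomial.reflect_mul _ _ (degGd_le hcov hGd hy.1) (degG_le hG hy.2),
          recGd hcov hGd hy.1, recG hG hy.2, Finset.sum_mul_sum, Finset.mul_sum]
        exact Finset.sum_congr rfl fun w _ => by rw [Finset.mul_sum])]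
      rw [triple_interchange z x (fun w y v =>
        Polynomial.C ((-1:ℤ)^(ρ y + ρ z)) *
          (((Polynomial.X - 1)^(ρ w - ρ z) * Gd (toDual y) (toDual w)) *
           ((Polynomial.X - 1)^(ρ x - ρ v) * G y v)))]
      rw [Finset.sum_congr rfl (fun w hw => Finset.sum_congr rfl (fun v hv => show
          (∑ y ∈ SS w v, Polynomial.C ((-1:ℤ)^(ρ y + ρ z)) *
            (((Polynomial.X - 1)^(ρ w - ρ z) * Gd (toDual y) (toDual w)) *
             ((Polynomial.X - 1)^(ρ x - ρ v) * G y v)))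
          = ((Polynomial.X - 1)^(ρ w - ρ z) * (Polynomial.X - 1)^(ρ x - ρ v) *
              Polynomial.C ((-1:ℤ)^(ρ z + ρ w))) *
            (∑ y ∈ SS w v, Polynomial.C ((-1:ℤ)^(ρ y + ρ w)) *
              (Gd (toDual y) (toDual w) * G y v)) from by
        rw [Finset.mul_sum]
        refine Finset.sum_congr rfl fun y hy => ?_
        have e3 : Polynomial.C ((-1:ℤ)^(ρ y + ρ z)) =
            Polynomial.C ((-1:ℤ)^(ρ z + ρ w)) * Polynomial.C ((-1:ℤ)^(ρ y + ρ w)) := by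
          rw [← map_mul, ← neg_one_pow_split]
        linear_combination ((Polynomial.X - 1 : Polynomial ℤ)^(ρ w - ρ z) *
          Gd (toDual y) (toDual w) * (Polynomial.X - 1)^(ρ x - ρ v) * G y v) * e3))]
      rw [Finset.sum_congr rfl (fun w hw => show
          (∑ v ∈ SS w x, ((Polynomial.X - 1)^(ρ w - ρ z) * (Polynomial.X - 1)^(ρ x - ρ v) *
              Polynomial.C ((-1:ℤ)^(ρ z + ρ w))) *
            (∑ y ∈ SS w v, Polynomial.C ((-1:ℤ)^(ρ y + ρ w)) *
              (Gd (toDual y) (toDual w) * G y v)))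
          = ((Polynomial.X - 1)^(ρ x - ρ z) * Polynomial.C ((-1:ℤ)^(ρ z))) *
              Polynomial.C ((-1:ℤ)^(ρ w)) + (if w = z then P else 0) from by
        rw [mem_SS] at hw
        have epow : (Polynomial.X - 1 : Polynomial ℤ)^(ρ w - ρ z) *
            (Polynomial.X - 1)^(ρ x - ρ w) = (Polynomial.X - 1)^(ρ x - ρ z) := by
          rw [← pow_add]
          congr 1
          have := hmono hw.1; have := hmono hw.2; omega
        have esgn : Polynomial.C ((-1:ℤ)^(ρ z + ρ w)) =
            Polynomial.C ((-1:ℤ)^(ρ z)) * Polynomial.C ((-1:ℤ)^(ρ w)) := by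
          rw [← map_mul, ← pow_add]
        by_cases hwz : w = z
        · subst hwz
          rw [if_pos rfl]
          rw [Finset.sum_eq_add_of_mem w x (mem_SS.2 ⟨le_rfl, hw.2⟩)
            (mem_SS.2 ⟨hw.2, le_rfl⟩) (ne_of_lt hzx)
            (fun v hv hvne => by
              rw [mem_SS] at hv
              rw [hKzero w v le_rfl (lt_of_le_of_ne hv.1 (Ne.symm hvne.1)) hv.2
                (fun hh => hvne.2 hh.2), mul_zero])]
          rw [hKdiag w, mul_one]
          have h1 : (∑ y ∈ SS w x, Polynomial.C ((-1:ℤ)^(ρ y + ρ w)) *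
              (Gd (toDual y) (toDual w) * G y x)) = P := hP.symm
          rw [h1]
          rw [Nat.sub_self, Nat.sub_self]
          have hS : Polynomial.C ((-1:ℤ)^(ρ w + ρ w)) = 1 := by
            rw [Even.neg_one_pow ⟨ρ w, rfl⟩, map_one]
          have hS2 : Polynomial.C ((-1:ℤ)^(ρ w)) * Polynomial.C ((-1:ℤ)^(ρ w)) = 1 := by
            rw [← map_mul, ← pow_add, Even.neg_one_pow ⟨ρ w, rfl⟩, map_one]
          linear_combination ((Polynomial.X - 1 : Polynomial ℤ)^(ρ x - ρ w)) * hS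
            - ((Polynomial.X - 1 : Polynomial ℤ)^(ρ x - ρ w)) * hS2 + P * hS
        · rw [if_neg hwz]
          rw [Finset.sum_eq_single_of_mem w (mem_SS.2 ⟨le_rfl, hw.2⟩)
            (fun v hv hvne => by
              rw [mem_SS] at hv
              rw [hKzero w v hw.1 (lt_of_le_of_ne hv.1 (Ne.symm hvne)) hv.2
                (fun hh => hwz hh.1), mul_zero])]
          rw [hKdiag w, mul_one, add_zero]
          linear_combination Polynomial.C ((-1:ℤ)^(ρ z + ρ w)) * epow
            + ((Polynomial.X - 1 : Polynomial ℤ)^(ρ x - ρ z)) * esgn)]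
      rw [Finset.sum_add_distrib]
      have hz1 : (∑ w ∈ SS z x, ((Polynomial.X - 1)^(ρ x - ρ z) *
          Polynomial.C ((-1:ℤ)^(ρ z))) * Polynomial.C ((-1:ℤ)^(ρ w))) = 0 := by
        rw [← Finset.mul_sum, euler_sum_C hE hzx, mul_zero]
      rw [hz1, zero_add]
      rw [Finset.sum_ite_eq' (SS z x) z (fun _ => P),
        if_pos (mem_SS.2 ⟨le_rfl, hzx.le⟩)]
    have hfin := eq_zero_of_reflect_eq P (ρ x - ρ z) key hdeg
    rw [hP] at hfin
    exact hfin

end Main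

open OrderDual in
theorem statement10 {α : Type*} [Fintype α] [PartialOrder α] [BoundedOrder α]
    (ρ : α → ℕ) (hbot : ρ ⊥ = 0) (hcov : ∀ a b : α, a ⋖ b → ρ b = ρ a + 1)
    (hrank : 1 ≤ ρ ⊤) (hE : IsEulerian ρ)
    (G : α → α → Polynomial ℤ) (hG : IsGSystem ρ G)
    (Gd : αᵒᵈ → αᵒᵈ → Polynomial ℤ)
    (hGd : IsGSystem (fun y : αᵒᵈ => ρ ⊤ - ρ (ofDual y)) Gd) :
    (∑ x : α, (-1 : Polynomial ℤ) ^ ρ x * G ⊥ x * Gd (toDual ⊤) (toDual x) = 0) ∧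
    (∑ x : α, (-1 : Polynomial ℤ) ^ ρ x * Gd (toDual x) (toDual ⊥) * G x ⊤ = 0) := by
  have hbt : (⊥ : α) < ⊤ := by
    refine lt_of_le_of_ne bot_le (fun h => ?_)
    rw [← h, hbot] at hrank
    omega
  have hSSuniv : SS (⊥ : α) ⊤ = Finset.univ := by
    rw [SS]
    apply Finset.filter_true_of_mem
    intro y _
    exact ⟨bot_le, le_top⟩
  constructor
  · have h0 := P1 hcov hE hG hGd hbt
    rw [hSSuniv] at h0
    rw [← h0]
    exact Finset.sum_congr rfl fun y _ => by
      rw [hbot, Nat.add_zero, ← C_neg_one_pow, mul_assoc]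
  · have h0 := P2 hcov hE hG hGd (ρ ⊤) ⊥ ⊤ hbt (by rw [hbot]; omega)
    rw [hSSuniv] at h0
    rw [← h0]
    exact Finset.sum_congr rfl fun y _ => by
      rw [hbot, Nat.add_zero, ← C_neg_one_pow, mul_assoc]
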